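/- Let A' ⊆ E ∪ {a, γ} and A = A' \ {a, γ}. If A' = A ∪ {γ}, cl(A) contains no OX-circuit of M, and e ∉ cl(A), then cl'(A') = cl(A) ∪ {γ} ∪ T(A). -/

import Mathlib

open Set

namespace ESSplit

variable {α : Type*}

/-- A circuit of a matroid: a minimal dependent set. -/
def IsCircuit (M : Matroid α) (C : Set α) : Prop :=
  M.Dep C ∧ ∀ D, D ⊂ C → M.Indep D

/-- A binary matroid: one representable over GF(2). -/
def IsBinary (M : Matroid α) : Prop :=
  ∃ (n : ℕ) (φ : α → (Fin n → ZMod 2)),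
    ∀ I, I ⊆ M.E → (M.Indep I ↔ LinearIndependent (ZMod 2) (fun x : I => φ x.1))

/-- An OX-circuit: a circuit meeting `X` in an odd number of elements. -/
def IsOX (M : Matroid α) (X C : Set α) : Prop :=
  IsCircuit M C ∧ Odd (C ∩ X).ncard

/-- An EX-circuit: a circuit meeting `X` in an even number of elements. -/
def IsEX (M : Matroid α) (X C : Set α) : Prop :=
  IsCircuit M C ∧ Even (C ∩ X).ncard

/-- `D` is a union of two disjoint OX-circuits containing no EX-circuit. -/
def OXUnion (M : Matroid α) (X D : Set α) : Prop :=
  ∃ C₁ C₂, IsOX M X C₁ ∧ IsOX M X C₂ ∧ Disjoint C₁ C₂ ∧ D = C₁ ∪ C₂ ∧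
    ¬ ∃ C₀, IsEX M X C₀ ∧ C₀ ⊆ D

/-- The description of the circuits of the es-splitting matroid `M_X^e`. -/
def ESCircuit (M : Matroid α) (X : Set α) (e a γ : α) (C : Set α) : Prop :=
  C = {e, a, γ} ∨
  IsEX M X C ∨
  (OXUnion M X C ∧ ∀ D, OXUnion M X D → D ⊆ C → D = C) ∨
  (∃ C₀, IsOX M X C₀ ∧ C = C₀ ∪ {a}) ∨
  (∃ C₀, IsOX M X C₀ ∧ e ∉ C₀ ∧ C = C₀ ∪ {e, γ}) ∨
  (∃ C₀, IsOX M X C₀ ∧ e ∈ C₀ ∧ C = (C₀ \ {e}) ∪ {γ}) ∨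
  (∃ C₀, IsCircuit M C₀ ∧ e ∈ C₀ ∧ Odd (((C₀ \ {e}) ∩ X).ncard) ∧
      C = (C₀ \ {e}) ∪ {a, γ})

/-- `M'` is the es-splitting matroid `M_X^e` of `M` (with new elements `a`, `γ`):
it has ground set `M.E ∪ {a, γ}` and its circuits are exactly as described. -/
def IsESSplit (M M' : Matroid α) (X : Set α) (e a γ : α) : Prop :=
  M'.E = M.E ∪ {a, γ} ∧ ∀ C, IsCircuit M' C ↔ ESCircuit M X e a γ C

/-- The set `T(A)`. -/
def T (M : Matroid α) (X : Set α) (e : α) (A : Set α) : Set α :=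
  {x | x ∈ M.E \ A ∧ x ≠ e ∧ ∃ C, IsOX M X C ∧ x ∈ C ∧ e ∈ C ∧ C ⊆ A ∪ {e, x}}

/-- The set `F(A)`. -/
def F (M : Matroid α) (X A : Set α) : Set α :=
  {x | x ∈ M.closure A \ A ∧ ∃ C, IsOX M X C ∧ x ∈ C ∧ C ⊆ M.closure A}

/-- The rank of a set `A` in a (finite) matroid: the maximum size of an
independent subset of `A`. -/
noncomputable def rk (M : Matroid α) (A : Set α) : ℕ :=
  sSup {n | ∃ I, M.Indep I ∧ I ⊆ A ∧ I.ncard = n}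

end ESSplit

open ESSplit

section Aux

variable {α : Type*} {M : Matroid α}

lemma exists_isCircuit_subset (hfin : M.E.Finite) {D : Set α} (hD : M.Dep D) :
    ∃ C, IsCircuit M C ∧ C ⊆ D := by
  have hS : {S : Set α | S ⊆ D ∧ M.Dep S}.Finite :=
    ((hfin.subset hD.subset_ground).finite_subsets).subset fun S hS => hS.1
  obtain ⟨C, ⟨hCD, hCdep⟩, hmin⟩ :=
    Set.Finite.exists_minimal hS ⟨D, Subset.rfl, hD⟩
  refine ⟨C, ⟨hCdep, fun B hB => ?_⟩, hCD⟩
  by_contra hBi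
  rw [Matroid.not_indep_iff (hB.subset.trans hCdep.subset_ground)] at hBi
  exact hB.ne (hB.subset.antisymm (hmin ⟨hB.subset.trans hCD, hBi⟩ hB.subset))

lemma mem_closure_iff_circuit (hfin : M.E.Finite) {A : Set α} (hA : A ⊆ M.E) {x : α}
    (hx : x ∉ A) :
    x ∈ M.closure A ↔ ∃ C, IsCircuit M C ∧ x ∈ C ∧ C ⊆ insert x A := by
  constructor
  · intro hxc
    obtain ⟨I, hI⟩ := M.exists_isBasis A
    have hxI : x ∉ I := fun h => hx (hI.subset h)
    have hdep : M.Dep (insert x I) := by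
      rw [← hI.indep.mem_closure_iff_of_notMem hxI, hI.closure_eq_closure]; exact hxc
    obtain ⟨C, hC, hCsub⟩ := exists_isCircuit_subset hfin hdep
    refine ⟨C, hC, ?_, hCsub.trans (insert_subset_insert hI.subset)⟩
    by_contra hxC
    have hCI : C ⊆ I := fun y hy => ((hCsub hy).resolve_left (fun h => hxC (h ▸ hy)))
    exact (hI.indep.subset hCI).not_dep hC.1
  · rintro ⟨C, hC, hxC, hCsub⟩
    have hCx : C \ {x} ⊆ A := fun y hy => ((hCsub hy.1).resolve_left hy.2)
    have hind : M.Indep (C \ {x}) := hC.2 _ (diff_subset.ssubset_of_not_subset fun h => (h hxC).2 rfl)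
    have hxcl : x ∈ M.closure (C \ {x}) := by
      rw [hind.mem_closure_iff_of_notMem (fun h => h.2 rfl), insert_diff_singleton,
        insert_eq_of_mem hxC]
      exact hC.1
    exact M.closure_subset_closure hCx hxcl

end Aux

theorem closure_eq_closure_union_gamma_union_T
    {α : Type*} (M M' : Matroid α) (X : Set α) (e a γ : α)
    (hfin : M.E.Finite) (hbin : IsBinary M)
    (hXE : X ⊆ M.E) (heX : e ∈ X) (haE : a ∉ M.E) (hγE : γ ∉ M.E) (haγ : a ≠ γ)
    (hsplit : IsESSplit M M' X e a γ)
    (A' A : Set α) (hA'sub : A' ⊆ M.E ∪ {a, γ}) (hA : A = A' \ {a, γ})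
    (hAA : A' = A ∪ {γ}) (hnoOX : ¬ ∃ C, IsOX M X C ∧ C ⊆ M.closure A)
    (heA : e ∉ M.closure A) :
    M'.closure A' = M.closure A ∪ {γ} ∪ T M X e A := by
  classical
  obtain ⟨hE', hcirc⟩ := hsplit
  have hAE : A ⊆ M.E := by
    rintro y hy
    rw [hA] at hy
    rcases hA'sub hy.1 with h | h
    · exact h
    · exact absurd h hy.2
  have hAcl : A ⊆ M.closure A := M.subset_closure A hAE
  have heA0 : e ∉ A := fun h => heA (hAcl h)
  have heE : e ∈ M.E := hXE heX
  have heγ : e ≠ γ := fun h => hγE (h ▸ heE)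
  have hea : e ≠ a := fun h => haE (h ▸ heE)
  have hγA : γ ∉ A := fun h => hγE (hAE h)
  have haA : a ∉ A := fun h => haE (hAE h)
  have haA' : a ∉ A' := by
    rw [hAA]; rintro (h | h)
    · exact haA h
    · exact haγ h
  have hA'E : A' ⊆ M'.E := by rw [hE']; exact hA'sub
  have hM'fin : M'.E.Finite := by
    rw [hE']; exact hfin.union ((Set.finite_singleton γ).insert a)
  have hγA' : γ ∈ A' := by rw [hAA]; exact Or.inr rfl
  -- helper consequences of hypotheses
  have hnoOXA : ∀ C, IsOX M X C → ¬ C ⊆ A := fun C hC hsub =>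
    hnoOX ⟨C, hC, hsub.trans hAcl⟩
  have hnoeC : ∀ C, IsCircuit M C → e ∈ C → ¬ C ⊆ insert e A := by
    intro C hC heC hsub
    exact heA ((mem_closure_iff_circuit hfin hAE heA0).mpr ⟨C, hC, heC, hsub⟩)
  ext x
  constructor
  · intro hx
    by_cases hxA' : x ∈ A'
    · rw [hAA] at hxA'
      rcases hxA' with h | h
      · exact Or.inl (Or.inl (hAcl h))
      · exact Or.inl (Or.inr h)
    obtain ⟨C', hC', hxC', hsub'⟩ := (mem_closure_iff_circuit hM'fin hA'E hxA').mp hx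
    have hxA : x ∉ A := fun h => hxA' (by rw [hAA]; exact Or.inl h)
    -- a generic fact : any subset of `insert x A'` contained in `M.E`, with x possibly removed
    have hsubA : ∀ y ∈ C', y ∈ M.E → y ≠ x → y ∈ A := by
      intro y hy hyE hyx
      rcases hsub' hy with h | h
      · exact absurd h hyx
      · rw [hAA] at h
        rcases h with h | h
        · exact h
        · exact absurd (h ▸ hyE) hγE
    rcases (hcirc C').mp hC' with hΔ | hEX | hOXU | hOXa | hOXeγ | hOXγ | hOXaγ
    · -- C' = {e, a, γ}
      exfalso
      have he' : e ∈ C' := by rw [hΔ]; exact Or.inl rfl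
      have ha' : a ∈ C' := by rw [hΔ]; exact Or.inr (Or.inl rfl)
      rcases hsub' he' with h | h
      · -- e = x
        rcases hsub' ha' with h2 | h2
        · exact hea (h ▸ h2.symm ▸ rfl)
        · rw [hAA] at h2
          rcases h2 with h2 | h2
          · exact haA h2
          · exact haγ h2
      · rw [hAA] at h
        rcases h with h | h
        · exact heA0 h
        · exact heγ h
    · -- EX circuit
      have hCE : C' ⊆ M.E := hEX.1.1.subset_ground
      have hCsub : C' ⊆ insert x A := fun y hy => by
        by_cases hyx : y = x
        · exact Or.inl hyx
        · exact Or.inr (hsubA y hy (hCE hy) hyx)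
      exact Or.inl (Or.inl ((mem_closure_iff_circuit hfin hAE hxA).mpr
        ⟨C', hEX.1, hxC', hCsub⟩))
    · -- union of two disjoint OX circuits : impossible
      exfalso
      obtain ⟨⟨C₁, C₂, h1, h2, hdis, hCeq, _⟩, _⟩ := hOXU
      have hCE : C' ⊆ M.E := by
        rw [hCeq]; exact union_subset h1.1.1.subset_ground h2.1.1.subset_ground
      have hCsub : ∀ y ∈ C', y ≠ x → y ∈ A := fun y hy hyx => hsubA y hy (hCE hy) hyx
      rw [hCeq] at hxC'
      rcases hxC' with hx1 | hx2
      · refine hnoOXA C₂ h2 fun y hy => hCsub y (hCeq ▸ Or.inr hy) fun hyx => ?_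
        exact (disjoint_left.mp hdis hx1) (hyx ▸ hy)
      · refine hnoOXA C₁ h1 fun y hy => hCsub y (hCeq ▸ Or.inl hy) fun hyx => ?_
        exact (disjoint_left.mp hdis (hyx ▸ hy)) hx2
    · -- C' = C₀ ∪ {a} : impossible
      exfalso
      obtain ⟨C₀, hC₀, hCeq⟩ := hOXa
      have ha' : a ∈ C' := by rw [hCeq]; exact Or.inr rfl
      have hax : a = x := by
        rcases hsub' ha' with h | h
        · exact h
        · rw [hAA] at h
          rcases h with h | h
          · exact absurd h haA
          · exact absurd h haγ
      refine hnoOXA C₀ hC₀ fun y hy => ?_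
      have hyE : y ∈ M.E := hC₀.1.1.subset_ground hy
      refine hsubA y (by rw [hCeq]; exact Or.inl hy) hyE fun hyx => ?_
      exact haE ((hyx.trans hax.symm) ▸ hyE)
    · -- C' = C₀ ∪ {e, γ} : impossible
      exfalso
      obtain ⟨C₀, hC₀, heC₀, hCeq⟩ := hOXeγ
      have he' : e ∈ C' := by rw [hCeq]; exact Or.inr (Or.inl rfl)
      have hex : e = x := by
        rcases hsub' he' with h | h
        · exact h
        · rw [hAA] at h
          rcases h with h | h
          · exact absurd h heA0
          · exact absurd h heγ
      refine hnoOXA C₀ hC₀ fun y hy => ?_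
      have hyE : y ∈ M.E := hC₀.1.1.subset_ground hy
      refine hsubA y (by rw [hCeq]; exact Or.inl hy) hyE fun hyx => ?_
      exact heC₀ ((hyx.trans hex.symm) ▸ hy)
    · -- C' = (C₀ \ {e}) ∪ {γ} : gives x ∈ T
      obtain ⟨C₀, hC₀, heC₀, hCeq⟩ := hOXγ
      rw [hCeq] at hxC'
      rcases hxC' with hx0 | hxγ
      · have hxe : x ≠ e := hx0.2
        have hxE : x ∈ M.E := hC₀.1.1.subset_ground hx0.1
        refine Or.inr ⟨⟨hxE, hxA⟩, hxe, C₀, hC₀, hx0.1, heC₀, fun y hy => ?_⟩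
        by_cases hye : y = e
        · exact Or.inr (Or.inl hye)
        by_cases hyx : y = x
        · exact Or.inr (Or.inr hyx)
        have hyE : y ∈ M.E := hC₀.1.1.subset_ground hy
        exact Or.inl (hsubA y (by rw [hCeq]; exact Or.inl ⟨hy, hye⟩) hyE hyx)
      · exact absurd (show x = γ from hxγ) fun h => hxA' (h ▸ hγA')
    · -- C' = (C₀ \ {e}) ∪ {a, γ} : impossible
      exfalso
      obtain ⟨C₀, hC₀, heC₀, _, hCeq⟩ := hOXaγ
      have ha' : a ∈ C' := by rw [hCeq]; exact Or.inr (Or.inl rfl)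
      have hax : a = x := by
        rcases hsub' ha' with h | h
        · exact h
        · rw [hAA] at h
          rcases h with h | h
          · exact absurd h haA
          · exact absurd h haγ
      refine hnoeC C₀ hC₀ heC₀ fun y hy => ?_
      have hyE : y ∈ M.E := hC₀.1.subset_ground hy
      by_cases hye : y = e
      · exact Or.inl hye
      refine Or.inr (hsubA y (by rw [hCeq]; exact Or.inl ⟨hy, hye⟩) hyE fun hyx => ?_)
      exact haE ((hyx.trans hax.symm) ▸ hyE)
  · intro hx
    rcases hx with (hx | hx) | hx
    · -- x ∈ M.closure A
      by_cases hxA : x ∈ A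
      · exact M'.subset_closure A' hA'E (by rw [hAA]; exact Or.inl hxA)
      obtain ⟨C, hC, hxC, hCsub⟩ := (mem_closure_iff_circuit hfin hAE hxA).mp hx
      have hCcl : C ⊆ M.closure A := by
        refine hCsub.trans (insert_subset hx hAcl)
      have hEX : IsEX M X C := by
        refine ⟨hC, ?_⟩
        rcases Nat.even_or_odd (C ∩ X).ncard with h | h
        · exact h
        · exact absurd ⟨C, ⟨hC, h⟩, hCcl⟩ hnoOX
      have hC' : IsCircuit M' C := (hcirc C).mpr (Or.inr (Or.inl hEX))
      have hxE : x ∈ M.E := M.closure_subset_ground A hx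
      have hxA' : x ∉ A' := by
        rw [hAA]; rintro (h | h)
        · exact hxA h
        · exact hγE (h ▸ hxE)
      refine (mem_closure_iff_circuit hM'fin hA'E hxA').mpr ⟨C, hC', hxC, ?_⟩
      exact hCsub.trans (insert_subset_insert (by rw [hAA]; exact subset_union_left))
    · -- x = γ
      exact M'.subset_closure A' hA'E (hx ▸ hγA')
    · -- x ∈ T
      obtain ⟨⟨hxE, hxA⟩, hxe, C, hOX, hxC, heC, hCsub⟩ := hx
      have hC' : IsCircuit M' ((C \ {e}) ∪ {γ}) :=
        (hcirc _).mpr (Or.inr (Or.inr (Or.inr (Or.inr (Or.inr (Or.inl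
          ⟨C, hOX, heC, rfl⟩))))))
      have hxA' : x ∉ A' := by
        rw [hAA]; rintro (h | h)
        · exact hxA h
        · exact hγE (h ▸ hxE)
      refine (mem_closure_iff_circuit hM'fin hA'E hxA').mpr
        ⟨(C \ {e}) ∪ {γ}, hC', Or.inl ⟨hxC, hxe⟩, ?_⟩
      rintro y (hy | hy)
      · rcases hCsub hy.1 with h | h | h
        · exact Or.inr (by rw [hAA]; exact Or.inl h)
        · exact absurd h hy.2
        · exact Or.inl h
      · exact Or.inr (hAA ▸ Or.inr hy)
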